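/- Let b > 0 and let f : Ω×ℝ → ℝ be a Carathéodory function with f(x,t) = 0 for a.e. x ∈ Ω and all t ≤ 0, with f(x,b) ≤ 0 for a.e. x ∈ Ω, and with |f(x,t)| ≤ a_b(x) for a.e. x ∈ Ω and all t ∈ [0,b] for some a_b ∈ L^∞(Ω). Define f̌(x,t) = f(x, min{t, b}). Then every weak solution u ∈ W^{s,p}_0(Ω) of (−Δ)_p^s u = f̌(x,u) in Ω satisfies 0 ≤ u ≤ b a.e. in Ω; consequently u is a weak solution of (−Δ)_p^s u = f(x,u) in Ω. -/

import Mathlib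

open MeasureTheory Set Metric Bornology
open scoped ENNReal

noncomputable section

abbrev Eu (N : ℕ) := EuclideanSpace ℝ (Fin N)

/-- A bounded domain with `C^{1,1}` boundary: open, connected, bounded, and a level-set
description by a `C^1` function with Lipschitz derivative and nonvanishing gradient
on the boundary. -/
def IsC11Domain {N : ℕ} (Ω : Set (Eu N)) : Prop :=
  IsOpen Ω ∧ IsConnected Ω ∧ IsBounded Ω ∧
    ∃ f : Eu N → ℝ, ContDiff ℝ 1 f ∧ (∃ L : NNReal, LipschitzWith L (fderiv ℝ f)) ∧
      Ω = {x | f x < 0} ∧ ∀ x ∈ frontier Ω, fderiv ℝ f x ≠ 0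

/-- The `p`-th power of the Gagliardo seminorm, as an extended real. -/
def gagliardoE (N : ℕ) (s p : ℝ) (u : Eu N → ℝ) : ℝ≥0∞ :=
  ∫⁻ x, ∫⁻ y, ENNReal.ofReal (|u x - u y| ^ p / dist x y ^ ((N : ℝ) + p * s))

/-- Gagliardo seminorm (to the power 1) restricted to a region `A`. -/
def gagliardoOnE (N : ℕ) (s p : ℝ) (A : Set (Eu N)) (u : Eu N → ℝ) : ℝ≥0∞ :=
  ∫⁻ x in A, ∫⁻ y in A, ENNReal.ofReal (|u x - u y| ^ p / dist x y ^ ((N : ℝ) + p * s))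

/-- The norm `‖u‖ = [u]_{s,p}` of `W^{s,p}_0(Ω)`. -/
def fracNorm (N : ℕ) (s p : ℝ) (u : Eu N → ℝ) : ℝ :=
  (gagliardoE N s p u).toReal ^ (1 / p)

/-- Membership in `W^{s,p}_0(Ω)`. -/
def MemW0 (N : ℕ) (s p : ℝ) (Ω : Set (Eu N)) (u : Eu N → ℝ) : Prop :=
  MemLp u (ENNReal.ofReal p) volume ∧ gagliardoE N s p u < ⊤ ∧
    ∀ᵐ x, x ∉ Ω → u x = 0

/-- Membership in `W̃^{s,p}(Ω)`. -/
def MemWtilde (N : ℕ) (s p : ℝ) (Ω : Set (Eu N)) (u : Eu N → ℝ) : Prop :=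
  AEMeasurable u volume ∧
  (∀ K : Set (Eu N), IsCompact K → ∫⁻ x in K, ENNReal.ofReal (|u x| ^ p) < ⊤) ∧
  (∃ Ω' : Set (Eu N), IsOpen Ω' ∧ closure Ω ⊆ Ω' ∧
     (∫⁻ x in Ω', ENNReal.ofReal (|u x| ^ p)) < ⊤ ∧ gagliardoOnE N s p Ω' u < ⊤) ∧
  ∫⁻ x, ENNReal.ofReal (|u x| ^ (p - 1) / (1 + ‖x‖) ^ ((N : ℝ) + p * s)) < ⊤

/-- The weak pairing `⟨(-Δ)_p^s u, φ⟩`. -/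
def fracPairing (N : ℕ) (s p : ℝ) (u φ : Eu N → ℝ) : ℝ :=
  ∫ x, ∫ y, |u x - u y| ^ (p - 2) * (u x - u y) * (φ x - φ y) / dist x y ^ ((N : ℝ) + p * s)

/-- `u` is a weak solution of `(-Δ)_p^s u = g(x,u)` in `Ω`, `u = 0` in `Ω^c`. -/
def IsWeakSolution (N : ℕ) (s p : ℝ) (Ω : Set (Eu N)) (g : Eu N → ℝ → ℝ)
    (u : Eu N → ℝ) : Prop :=
  MemW0 N s p Ω u ∧
    ∀ φ : Eu N → ℝ, MemW0 N s p Ω φ →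
      fracPairing N s p u φ = ∫ x in Ω, g x (u x) * φ x

/-- Carathéodory function on `Ω × ℝ`. -/
def IsCaratheodory {N : ℕ} (Ω : Set (Eu N)) (f : Eu N → ℝ → ℝ) : Prop :=
  (∀ t : ℝ, Measurable fun x => f x t) ∧ ∀ᵐ x, x ∈ Ω → Continuous fun t => f x t

/-- Membership in `L^∞(Ω)`. -/
def MemLinftyOn {N : ℕ} (Ω : Set (Eu N)) (a : Eu N → ℝ) : Prop :=
  Measurable a ∧ ∃ C : ℝ, ∀ᵐ x, x ∈ Ω → |a x| ≤ C

/-- The principal eigenvalue `λ₁` of `(-Δ)_p^s` in `Ω`. -/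
def lambda1 (N : ℕ) (s p : ℝ) (Ω : Set (Eu N)) : ℝ :=
  sInf { r : ℝ | ∃ u : Eu N → ℝ, MemW0 N s p Ω u ∧ (0 < ∫ x in Ω, |u x| ^ p) ∧
    r = fracNorm N s p u ^ p / ∫ x in Ω, |u x| ^ p }

/-- The principal eigenvalue `λ₁(m)` with weight `m`. -/
def lambda1W (N : ℕ) (s p : ℝ) (Ω : Set (Eu N)) (m : Eu N → ℝ) : ℝ :=
  sInf { r : ℝ | ∃ u : Eu N → ℝ, MemW0 N s p Ω u ∧ (0 < ∫ x in Ω, m x * |u x| ^ p) ∧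
    r = fracNorm N s p u ^ p / ∫ x in Ω, m x * |u x| ^ p }

/-- The best Sobolev-type constant `c_q`. -/
def sobQuotInf (N : ℕ) (s p q : ℝ) (Ω : Set (Eu N)) : ℝ :=
  sInf { r : ℝ | ∃ u : Eu N → ℝ, MemW0 N s p Ω u ∧ ¬ (u =ᵐ[volume] (0 : Eu N → ℝ)) ∧
    r = fracNorm N s p u / (∫ x in Ω, |u x| ^ q) ^ (1 / q) }

/-- The fractional critical exponent `p*_s`. -/
def pstar (N : ℕ) (s p : ℝ) : ℝ := N * p / (N - p * s)

/-- The energy functional `Φ(u) = ‖u‖^p/p - ∫_Ω F(x,u) dx`. -/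
def energy (N : ℕ) (s p : ℝ) (Ω : Set (Eu N)) (f : Eu N → ℝ → ℝ) (u : Eu N → ℝ) : ℝ :=
  fracNorm N s p u ^ p / p - ∫ x in Ω, ∫ τ in (0:ℝ)..(u x), f x τ



section Aux

variable {N : ℕ}

/-! ### Pointwise inequalities -/

private lemma aemeasurable_abs {α : Type*} [MeasurableSpace α] {μ : MeasureTheory.Measure α}
    {f : α → ℝ} (h : AEMeasurable f μ) : AEMeasurable (fun x => |f x|) μ :=
  (h.aestronglyMeasurable.norm).aemeasurable

private lemma key_core (p : ℝ) (hp : 2 ≤ p) {A B : ℝ} (hB : 0 ≤ B) (hBA : B ≤ A) :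
    B ^ p ≤ A ^ (p - 2) * A * B := by
  rcases eq_or_lt_of_le hB with h0 | hBpos
  · rw [← h0, Real.zero_rpow (show p ≠ 0 by linarith)]
    simp
  · have hA : 0 < A := lt_of_lt_of_le hBpos hBA
    have h1 : A ^ (p - 2) * A = A ^ (p - 1) := by
      have := Real.rpow_add hA (p - 2) 1
      rw [Real.rpow_one] at this
      rw [← this]; congr 1; ring
    have h2 : B ^ (p - 1) * B = B ^ p := by
      have := Real.rpow_add hBpos (p - 1) 1
      rw [Real.rpow_one] at this
      rw [← this]; congr 1; ring
    have h3 : B ^ (p - 1) ≤ A ^ (p - 1) := Real.rpow_le_rpow hB hBA (by linarith)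
    calc B ^ p = B ^ (p - 1) * B := h2.symm
      _ ≤ A ^ (p - 1) * B := mul_le_mul_of_nonneg_right h3 hB
      _ = A ^ (p - 2) * A * B := by rw [h1]

private lemma negpart_lip (a c : ℝ) : |max (-a) 0 - max (-c) 0| ≤ |a - c| := by
  calc |max (-a) 0 - max (-c) 0| ≤ |(-a) - (-c)| := abs_max_sub_max_le_abs _ _ _
    _ = |a - c| := by rw [show -a - -c = -(a - c) by ring, abs_neg]

private lemma pospart_lip (b a c : ℝ) : |max (a - b) 0 - max (c - b) 0| ≤ |a - c| := by
  calc |max (a - b) 0 - max (c - b) 0| ≤ |(a - b) - (c - b)| := abs_max_sub_max_le_abs _ _ _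
    _ = |a - c| := by rw [show a - b - (c - b) = a - c by ring]

private lemma key_neg (p : ℝ) (hp : 2 ≤ p) (a c : ℝ) :
    |a - c| ^ (p - 2) * (a - c) * (max (-a) 0 - max (-c) 0) ≤
      -|max (-a) 0 - max (-c) 0| ^ p := by
  have hBA : |max (-a) 0 - max (-c) 0| ≤ |a - c| := negpart_lip a c
  have hsign : (a - c) * (max (-a) 0 - max (-c) 0) ≤ 0 := by
    rcases le_total a c with h | h
    · exact mul_nonpos_iff.2 (Or.inr ⟨by linarith,
        sub_nonneg.2 (max_le_max (neg_le_neg h) le_rfl)⟩)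
    · exact mul_nonpos_iff.2 (Or.inl ⟨by linarith,
        sub_nonpos.2 (max_le_max (neg_le_neg h) le_rfl)⟩)
  have habs : (a - c) * (max (-a) 0 - max (-c) 0)
      = -(|a - c| * |max (-a) 0 - max (-c) 0|) := by
    have h1 := abs_mul (a - c) (max (-a) 0 - max (-c) 0)
    have h2 := abs_of_nonpos hsign
    linarith
  calc |a - c| ^ (p - 2) * (a - c) * (max (-a) 0 - max (-c) 0)
      = |a - c| ^ (p - 2) * ((a - c) * (max (-a) 0 - max (-c) 0)) := by ring
    _ = -(|a - c| ^ (p - 2) * |a - c| * |max (-a) 0 - max (-c) 0|) := by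
        rw [habs]; ring
    _ ≤ -|max (-a) 0 - max (-c) 0| ^ p := by
        have := key_core p hp (abs_nonneg (max (-a) 0 - max (-c) 0)) hBA
        linarith

private lemma key_pos (p : ℝ) (hp : 2 ≤ p) (b a c : ℝ) :
    |max (a - b) 0 - max (c - b) 0| ^ p ≤
      |a - c| ^ (p - 2) * (a - c) * (max (a - b) 0 - max (c - b) 0) := by
  have hBA : |max (a - b) 0 - max (c - b) 0| ≤ |a - c| := pospart_lip b a c
  have hsign : 0 ≤ (a - c) * (max (a - b) 0 - max (c - b) 0) := by
    rcases le_total a c with h | h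
    · exact mul_nonneg_iff.2 (Or.inr ⟨by linarith,
        sub_nonpos.2 (max_le_max (by linarith) le_rfl)⟩)
    · exact mul_nonneg (by linarith) (sub_nonneg.2 (max_le_max (by linarith) le_rfl))
  have habs : (a - c) * (max (a - b) 0 - max (c - b) 0)
      = |a - c| * |max (a - b) 0 - max (c - b) 0| := by
    have h1 := abs_mul (a - c) (max (a - b) 0 - max (c - b) 0)
    have h2 := abs_of_nonneg hsign
    linarith
  calc |max (a - b) 0 - max (c - b) 0| ^ p
      ≤ |a - c| ^ (p - 2) * |a - c| * |max (a - b) 0 - max (c - b) 0| :=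
        key_core p hp (abs_nonneg _) hBA
    _ = |a - c| ^ (p - 2) * ((a - c) * (max (a - b) 0 - max (c - b) 0)) := by
        rw [habs]; ring
    _ = |a - c| ^ (p - 2) * (a - c) * (max (a - b) 0 - max (c - b) 0) := by ring

private lemma absJ (p : ℝ) (hp : 2 ≤ p) (t : ℝ) :
    abs (|t| ^ (p - 2) * t) = |t| ^ (p - 1) := by
  rcases eq_or_ne t 0 with h | h
  · rw [h]
    simp [Real.zero_rpow (show p - 1 ≠ 0 by intro hh; linarith)]
  · have ht : 0 < |t| := abs_pos.2 h
    rw [abs_mul, abs_of_nonneg (Real.rpow_nonneg (abs_nonneg t) _)]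
    have := Real.rpow_add ht (p - 2) 1
    rw [Real.rpow_one] at this
    rw [← this]; congr 1; ring

/-! ### Gagliardo seminorm basics -/

private lemma gagliardoE_mono (N : ℕ) (s p : ℝ) (hp : 0 ≤ p) {u v : Eu N → ℝ}
    (h : ∀ x y, |v x - v y| ≤ |u x - u y|) :
    gagliardoE N s p v ≤ gagliardoE N s p u := by
  refine lintegral_mono fun x => lintegral_mono fun y => ENNReal.ofReal_le_ofReal ?_
  rw [div_eq_mul_inv, div_eq_mul_inv]
  exact mul_le_mul_of_nonneg_right (Real.rpow_le_rpow (abs_nonneg _) (h x y) hp)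
    (by positivity)

private lemma gagliardo_prod (N : ℕ) (s p : ℝ) {u : Eu N → ℝ}
    (hu : AEMeasurable u (volume : Measure (Eu N))) :
    gagliardoE N s p u = ∫⁻ z : Eu N × Eu N,
      ENNReal.ofReal (|u z.1 - u z.2| ^ p / dist z.1 z.2 ^ ((N : ℝ) + p * s))
      ∂((volume : Measure (Eu N)).prod volume) := by
  have h1 : AEMeasurable (fun z : Eu N × Eu N => u z.1)
      ((volume : Measure (Eu N)).prod volume) :=
    hu.comp_quasiMeasurePreserving Measure.quasiMeasurePreserving_fst
  have h2 : AEMeasurable (fun z : Eu N × Eu N => u z.2)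
      ((volume : Measure (Eu N)).prod volume) :=
    hu.comp_quasiMeasurePreserving Measure.quasiMeasurePreserving_snd
  have hdist : Measurable (fun z : Eu N × Eu N => dist z.1 z.2) := measurable_dist
  have habsU : AEMeasurable (fun z : Eu N × Eu N => |u z.1 - u z.2|)
      ((volume : Measure (Eu N)).prod volume) := aemeasurable_abs (h1.sub h2)
  have hpow : AEMeasurable (fun z : Eu N × Eu N => |u z.1 - u z.2| ^ p)
      ((volume : Measure (Eu N)).prod volume) := by fun_prop
  have hden : AEMeasurable (fun z : Eu N × Eu N => dist z.1 z.2 ^ ((N : ℝ) + p * s))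
      ((volume : Measure (Eu N)).prod volume) := by fun_prop
  refine lintegral_lintegral ?_
  show AEMeasurable (fun z : Eu N × Eu N =>
    ENNReal.ofReal (|u z.1 - u z.2| ^ p / dist z.1 z.2 ^ ((N : ℝ) + p * s)))
    ((volume : Measure (Eu N)).prod volume)
  exact ENNReal.measurable_ofReal.comp_aemeasurable (hpow.div hden)

/-! ### Hölder bound -/

private lemma holder_aux {α : Type*} [MeasurableSpace α] (μ : Measure α) (p c : ℝ)
    (hp : 2 ≤ p) (hc : 0 < c) (U Φ D : α → ℝ)
    (hU : AEMeasurable U μ) (hΦ : AEMeasurable Φ μ) (hD : Measurable D)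
    (hD0 : ∀ x, 0 ≤ D x) (hdegU : ∀ x, D x = 0 → U x = 0)
    (hdegΦ : ∀ x, D x = 0 → Φ x = 0) :
    ∫⁻ x, ENNReal.ofReal (|U x| ^ (p - 1) * |Φ x| / D x ^ c) ∂μ ≤
      (∫⁻ x, ENNReal.ofReal (|U x| ^ p / D x ^ c) ∂μ) ^ ((p - 1) / p) *
      (∫⁻ x, ENNReal.ofReal (|Φ x| ^ p / D x ^ c) ∂μ) ^ (1 / p) := by
  have hp1 : 1 < p := by linarith
  have hp0 : (0 : ℝ) < p := by linarith
  have hpm1 : (0 : ℝ) < p - 1 := by linarith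
  set q : ℝ := p / (p - 1) with hq_def
  have hq : q.HolderConjugate p := (Real.HolderConjugate.conjExponent hp1).symm
  have hq0 : 0 < q := div_pos hp0 hpm1
  set e1 : ℝ := c * (p - 1) / p with he1
  set e2 : ℝ := c / p with he2
  have he1pos : 0 < e1 := by positivity
  have he2pos : 0 < e2 := by positivity
  set F : α → ℝ≥0∞ := fun x => ENNReal.ofReal (|U x| ^ (p - 1) / D x ^ e1) with hF_def
  set G : α → ℝ≥0∞ := fun x => ENNReal.ofReal (|Φ x| / D x ^ e2) with hG_def
  have habsU : AEMeasurable (fun x => |U x|) μ := aemeasurable_abs hU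
  have habsΦ : AEMeasurable (fun x => |Φ x|) μ := aemeasurable_abs hΦ
  have hUp : AEMeasurable (fun x => |U x| ^ (p - 1)) μ := by fun_prop
  have hDe1 : AEMeasurable (fun x => D x ^ e1) μ := by fun_prop
  have hDe2 : AEMeasurable (fun x => D x ^ e2) μ := by fun_prop
  have hFmeas : AEMeasurable F μ :=
    ENNReal.measurable_ofReal.comp_aemeasurable (hUp.div hDe1)
  have hGmeas : AEMeasurable G μ :=
    ENNReal.measurable_ofReal.comp_aemeasurable (habsΦ.div hDe2)
  have step1 : ∀ x, ENNReal.ofReal (|U x| ^ (p - 1) * |Φ x| / D x ^ c) = (F * G) x := by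
    intro x
    by_cases hx : D x = 0
    · simp only [Pi.mul_apply, hF_def, hG_def, hx, hdegU x hx, hdegΦ x hx, abs_zero,
        Real.zero_rpow (show p - 1 ≠ 0 by linarith), zero_mul, zero_div,
        ENNReal.ofReal_zero, mul_zero]
    · have hDpos : 0 < D x := lt_of_le_of_ne (hD0 x) (Ne.symm hx)
      have h12 : D x ^ e1 * D x ^ e2 = D x ^ c := by
        rw [← Real.rpow_add hDpos]
        congr 1
        rw [he1, he2]; field_simp
        ring
      rw [Pi.mul_apply, hF_def, hG_def, ← ENNReal.ofReal_mul (by positivity)]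
      congr 1
      rw [div_mul_div_comm, h12]
  have step2 : ∀ x, F x ^ q = ENNReal.ofReal (|U x| ^ p / D x ^ c) := by
    intro x
    by_cases hx : D x = 0
    · simp only [hF_def, hx, hdegU x hx, abs_zero,
        Real.zero_rpow (show p - 1 ≠ 0 by linarith),
        Real.zero_rpow (show p ≠ 0 by linarith), zero_div, ENNReal.ofReal_zero,
        ENNReal.zero_rpow_of_pos hq0]
    · have hDpos : 0 < D x := lt_of_le_of_ne (hD0 x) (Ne.symm hx)
      rw [hF_def, ENNReal.ofReal_rpow_of_nonneg (by positivity) hq0.le]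
      congr 1
      rw [Real.div_rpow (by positivity) (by positivity)]
      rw [← Real.rpow_mul (abs_nonneg _), ← Real.rpow_mul (hD0 x)]
      have hpq : (p - 1) * q = p := by rw [hq_def]; field_simp
      have heq : e1 * q = c := by rw [he1, hq_def]; field_simp
      rw [hpq, heq]
  have step3 : ∀ x, G x ^ p = ENNReal.ofReal (|Φ x| ^ p / D x ^ c) := by
    intro x
    by_cases hx : D x = 0
    · simp only [hG_def, hx, hdegΦ x hx, abs_zero,
        Real.zero_rpow (show c ≠ 0 by linarith),
        Real.zero_rpow (show p ≠ 0 by linarith), div_zero, zero_div,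
        ENNReal.ofReal_zero, ENNReal.zero_rpow_of_pos hp0]
    · have hDpos : 0 < D x := lt_of_le_of_ne (hD0 x) (Ne.symm hx)
      rw [hG_def, ENNReal.ofReal_rpow_of_nonneg (by positivity) hp0.le]
      congr 1
      rw [Real.div_rpow (by positivity) (by positivity),
        ← Real.rpow_mul (hD0 x)]
      have heq : e2 * p = c := by rw [he2]; field_simp
      rw [heq]
  calc ∫⁻ x, ENNReal.ofReal (|U x| ^ (p - 1) * |Φ x| / D x ^ c) ∂μ
      = ∫⁻ x, (F * G) x ∂μ := lintegral_congr step1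
    _ ≤ (∫⁻ x, F x ^ q ∂μ) ^ (1 / q) * (∫⁻ x, G x ^ p ∂μ) ^ (1 / p) :=
        ENNReal.lintegral_mul_le_Lp_mul_Lq μ hq hFmeas hGmeas
    _ = (∫⁻ x, ENNReal.ofReal (|U x| ^ p / D x ^ c) ∂μ) ^ ((p - 1) / p) *
        (∫⁻ x, ENNReal.ofReal (|Φ x| ^ p / D x ^ c) ∂μ) ^ (1 / p) := by
        have h1q : 1 / q = (p - 1) / p := by
          rw [hq_def, one_div_div]
        rw [h1q, lintegral_congr step2, lintegral_congr step3]

/-! ### Representation of the pairing on the product space -/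

private lemma pairing_repr (N : ℕ) (s p : ℝ) (hp : 2 ≤ p) (hc : 0 < (N : ℝ) + p * s)
    {u φ : Eu N → ℝ} (hu : AEMeasurable u (volume : Measure (Eu N)))
    (hφ : AEMeasurable φ (volume : Measure (Eu N)))
    (hGu : gagliardoE N s p u ≠ ⊤) (hGφ : gagliardoE N s p φ ≠ ⊤) :
    Integrable (fun z : Eu N × Eu N =>
      |u z.1 - u z.2| ^ (p - 2) * (u z.1 - u z.2) * (φ z.1 - φ z.2) /
        dist z.1 z.2 ^ ((N : ℝ) + p * s)) ((volume : Measure (Eu N)).prod volume) ∧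
    fracPairing N s p u φ = ∫ z : Eu N × Eu N,
      |u z.1 - u z.2| ^ (p - 2) * (u z.1 - u z.2) * (φ z.1 - φ z.2) /
        dist z.1 z.2 ^ ((N : ℝ) + p * s) ∂((volume : Measure (Eu N)).prod volume) := by
  set c : ℝ := (N : ℝ) + p * s with hc_def
  set π : Measure (Eu N × Eu N) := (volume : Measure (Eu N)).prod volume with hπ
  have h1 : AEMeasurable (fun z : Eu N × Eu N => u z.1) π :=
    hu.comp_quasiMeasurePreserving Measure.quasiMeasurePreserving_fst
  have h2 : AEMeasurable (fun z : Eu N × Eu N => u z.2) π :=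
    hu.comp_quasiMeasurePreserving Measure.quasiMeasurePreserving_snd
  have h3 : AEMeasurable (fun z : Eu N × Eu N => φ z.1) π :=
    hφ.comp_quasiMeasurePreserving Measure.quasiMeasurePreserving_fst
  have h4 : AEMeasurable (fun z : Eu N × Eu N => φ z.2) π :=
    hφ.comp_quasiMeasurePreserving Measure.quasiMeasurePreserving_snd
  have hdist : Measurable (fun z : Eu N × Eu N => dist z.1 z.2) := measurable_dist
  have habsU : AEMeasurable (fun z : Eu N × Eu N => |u z.1 - u z.2|) π :=
    aemeasurable_abs (h1.sub h2)
  have habsΦ : AEMeasurable (fun z : Eu N × Eu N => |φ z.1 - φ z.2|) π :=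
    aemeasurable_abs (h3.sub h4)
  have hpow : AEMeasurable (fun z : Eu N × Eu N => |u z.1 - u z.2| ^ (p - 2)) π := by
    fun_prop
  have hden : AEMeasurable (fun z : Eu N × Eu N => dist z.1 z.2 ^ c) π := by fun_prop
  have hmeas : AEMeasurable (fun z : Eu N × Eu N =>
      |u z.1 - u z.2| ^ (p - 2) * (u z.1 - u z.2) * (φ z.1 - φ z.2) /
        dist z.1 z.2 ^ c) π :=
    ((hpow.mul (h1.sub h2)).mul (h3.sub h4)).div hden
  have habs : ∀ z : Eu N × Eu N,
      ‖|u z.1 - u z.2| ^ (p - 2) * (u z.1 - u z.2) * (φ z.1 - φ z.2) /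
        dist z.1 z.2 ^ c‖ =
      |u z.1 - u z.2| ^ (p - 1) * |φ z.1 - φ z.2| / dist z.1 z.2 ^ c := by
    intro z
    have hd0 : (0 : ℝ) ≤ dist z.1 z.2 := dist_nonneg
    rw [Real.norm_eq_abs, abs_div, abs_of_nonneg (Real.rpow_nonneg hd0 c),
      abs_mul, absJ p hp]
  have hfin : ∫⁻ z, ENNReal.ofReal
      (|u z.1 - u z.2| ^ (p - 1) * |φ z.1 - φ z.2| / dist z.1 z.2 ^ c) ∂π < ⊤ := by
    have hb := holder_aux π p c hp hc (fun z => u z.1 - u z.2) (fun z => φ z.1 - φ z.2)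
      (fun z => dist z.1 z.2) (h1.sub h2) (h3.sub h4) hdist
      (fun z => dist_nonneg)
      (fun z hz => by
        have h5 : z.1 = z.2 := by rwa [dist_eq_zero] at hz
        show u z.1 - u z.2 = 0
        rw [h5, sub_self])
      (fun z hz => by
        have h5 : z.1 = z.2 := by rwa [dist_eq_zero] at hz
        show φ z.1 - φ z.2 = 0
        rw [h5, sub_self])
    refine lt_of_le_of_lt hb ?_
    have hGu' := gagliardo_prod N s p hu
    have hGφ' := gagliardo_prod N s p hφ
    rw [← hπ] at hGu' hGφ'
    rw [← hGu', ← hGφ']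
    exact ENNReal.mul_lt_top
      (ENNReal.rpow_lt_top_of_nonneg
        (div_nonneg (by linarith) (by linarith)) hGu)
      (ENNReal.rpow_lt_top_of_nonneg
        (one_div_nonneg.2 (by linarith)) hGφ)
  have hInt : Integrable (fun z : Eu N × Eu N =>
      |u z.1 - u z.2| ^ (p - 2) * (u z.1 - u z.2) * (φ z.1 - φ z.2) /
        dist z.1 z.2 ^ c) π := by
    refine ⟨hmeas.aestronglyMeasurable, ?_⟩
    rw [hasFiniteIntegral_iff_norm]
    calc ∫⁻ z, ENNReal.ofReal ‖|u z.1 - u z.2| ^ (p - 2) * (u z.1 - u z.2) *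
          (φ z.1 - φ z.2) / dist z.1 z.2 ^ c‖ ∂π
        = ∫⁻ z, ENNReal.ofReal (|u z.1 - u z.2| ^ (p - 1) * |φ z.1 - φ z.2| /
            dist z.1 z.2 ^ c) ∂π := by
          refine lintegral_congr fun z => ?_
          rw [habs z]
      _ < ⊤ := hfin
  exact ⟨hInt, (integral_prod _ hInt).symm⟩

/-! ### Vanishing from zero Gagliardo seminorm -/

private lemma ae_zero_of_gagliardo_zero (N : ℕ) (s p : ℝ) (hN : 2 ≤ N) (hp : 0 < p)
    {Ω : Set (Eu N)} (hΩb : IsBounded Ω) {v : Eu N → ℝ}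
    (hv : AEMeasurable v (volume : Measure (Eu N)))
    (hG : gagliardoE N s p v = 0) (hz : ∀ᵐ x, x ∉ Ω → v x = 0) :
    v =ᵐ[(volume : Measure (Eu N))] 0 := by
  haveI : Nonempty (Fin N) := ⟨⟨0, by omega⟩⟩
  haveI : Nontrivial (EuclideanSpace ℝ (Fin N)) := by
    infer_instance
  set π : Measure (Eu N × Eu N) := (volume : Measure (Eu N)).prod volume with hπ
  set c : ℝ := (N : ℝ) + p * s with hc_def
  have h1 : AEMeasurable (fun z : Eu N × Eu N => v z.1) π :=
    hv.comp_quasiMeasurePreserving Measure.quasiMeasurePreserving_fst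
  have h2 : AEMeasurable (fun z : Eu N × Eu N => v z.2) π :=
    hv.comp_quasiMeasurePreserving Measure.quasiMeasurePreserving_snd
  have hdist : Measurable (fun z : Eu N × Eu N => dist z.1 z.2) := measurable_dist
  have habsV : AEMeasurable (fun z : Eu N × Eu N => |v z.1 - v z.2|) π :=
    aemeasurable_abs (h1.sub h2)
  have hpow : AEMeasurable (fun z : Eu N × Eu N => |v z.1 - v z.2| ^ p) π := by fun_prop
  have hden : AEMeasurable (fun z : Eu N × Eu N => dist z.1 z.2 ^ c) π := by fun_prop
  have hmeas : AEMeasurable (fun z : Eu N × Eu N =>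
      ENNReal.ofReal (|v z.1 - v z.2| ^ p / dist z.1 z.2 ^ c)) π :=
    ENNReal.measurable_ofReal.comp_aemeasurable (hpow.div hden)
  have hprod : ∫⁻ z : Eu N × Eu N,
      ENNReal.ofReal (|v z.1 - v z.2| ^ p / dist z.1 z.2 ^ c) ∂π = 0 := by
    rw [← gagliardo_prod N s p hv] at *
    exact hG
  rw [lintegral_eq_zero_iff' hmeas] at hprod
  have hdm : MeasurableSet {z : Eu N × Eu N | z.1 = z.2} :=
    measurableSet_eq_fun measurable_fst measurable_snd
  have hdiag : π {z : Eu N × Eu N | z.1 = z.2} = 0 := by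
    rw [hπ, Measure.prod_apply hdm]
    have hpre : ∀ x : Eu N, (Prod.mk x ⁻¹' {z : Eu N × Eu N | z.1 = z.2}) = {x} := by
      intro x; ext y; simp [eq_comm]
    simp [hpre]
  have hnd : ∀ᵐ z : Eu N × Eu N ∂π, z.1 ≠ z.2 := by
    rw [MeasureTheory.ae_iff]
    simpa using hdiag
  have hae : ∀ᵐ z : Eu N × Eu N ∂π, v z.1 = v z.2 := by
    filter_upwards [hprod, hnd] with z hz1 hz2
    have hd : 0 < dist z.1 z.2 := dist_pos.2 hz2
    have hdc : 0 < dist z.1 z.2 ^ c := Real.rpow_pos_of_pos hd c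
    rw [Pi.zero_apply, ENNReal.ofReal_eq_zero] at hz1
    have hnum : |v z.1 - v z.2| ^ p ≤ 0 := by
      by_contra hcon
      push_neg at hcon
      exact absurd hz1 (not_le.2 (div_pos hcon hdc))
    have habs0 : |v z.1 - v z.2| = 0 := by
      have h0 : |v z.1 - v z.2| ^ p = 0 :=
        le_antisymm hnum (Real.rpow_nonneg (abs_nonneg _) _)
      exact (Real.rpow_eq_zero (abs_nonneg _) (ne_of_gt hp)).1 h0
    exact sub_eq_zero.1 (abs_eq_zero.1 habs0)
  have hx := Measure.ae_ae_of_ae_prod hae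
  have hμc : (volume : Measure (Eu N)) Ωᶜ ≠ 0 := by
    intro h0
    have h1' : (volume : Measure (Eu N)) Set.univ = ⊤ :=
      measure_univ_of_isAddLeftInvariant volume
    have h2' : (volume : Measure (Eu N)) Set.univ ≤ volume Ω + volume Ωᶜ := by
      rw [← Set.union_compl_self Ω]
      exact measure_union_le _ _
    rw [h0, add_zero, h1'] at h2'
    exact absurd (top_le_iff.1 h2') (ne_of_lt hΩb.measure_lt_top)
  have hS : ∀ᵐ x, (∀ᵐ y, v x = v y) ∧ (x ∉ Ω → v x = 0) := hx.and hz
  obtain ⟨x₀, hx₀, hx₀Ω⟩ : ∃ x₀, ((∀ᵐ y, v x₀ = v y) ∧ (x₀ ∉ Ω → v x₀ = 0)) ∧ x₀ ∉ Ω := by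
    by_contra hcon
    push_neg at hcon
    apply hμc
    refine measure_mono_null (fun x hxc => ?_) (MeasureTheory.ae_iff.1 hS)
    intro hPx
    exact hxc (hcon x hPx)
  have hv0 : v x₀ = 0 := hx₀.2 hx₀Ω
  filter_upwards [hx₀.1] with y hy
  rw [Pi.zero_apply, ← hy, hv0]

/-! ### Truncation membership lemmas -/

private lemma memW0_negPart {N : ℕ} {s p : ℝ} {Ω : Set (Eu N)} (hp : 2 ≤ p)
    {u : Eu N → ℝ} (hu : MemW0 N s p Ω u) :
    MemW0 N s p Ω (fun x => max (-u x) 0) := by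
  obtain ⟨hLp, hG, hZ⟩ := hu
  refine ⟨?_, ?_, ?_⟩
  · refine MemLp.of_le hLp ?_ (Filter.Eventually.of_forall fun x => ?_)
    · have : AEMeasurable u (volume : Measure (Eu N)) := hLp.1.aemeasurable
      exact (by fun_prop : AEMeasurable (fun x => max (-u x) 0)
        (volume : Measure (Eu N))).aestronglyMeasurable
    · rw [Real.norm_eq_abs, Real.norm_eq_abs,
        abs_of_nonneg (le_max_right (-u x) 0)]
      exact max_le (neg_le_abs _) (abs_nonneg _)
  · exact lt_of_le_of_lt
      (gagliardoE_mono N s p (by linarith) fun x y => negpart_lip (u x) (u y)) hG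
  · filter_upwards [hZ] with x hx hxΩ
    rw [hx hxΩ]; simp

private lemma memW0_posPartSub {N : ℕ} {s p : ℝ} {Ω : Set (Eu N)} (hp : 2 ≤ p)
    {b : ℝ} (hb : 0 < b) {u : Eu N → ℝ} (hu : MemW0 N s p Ω u) :
    MemW0 N s p Ω (fun x => max (u x - b) 0) := by
  obtain ⟨hLp, hG, hZ⟩ := hu
  refine ⟨?_, ?_, ?_⟩
  · refine MemLp.of_le hLp ?_ (Filter.Eventually.of_forall fun x => ?_)
    · have : AEMeasurable u (volume : Measure (Eu N)) := hLp.1.aemeasurable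
      exact (by fun_prop : AEMeasurable (fun x => max (u x - b) 0)
        (volume : Measure (Eu N))).aestronglyMeasurable
    · rw [Real.norm_eq_abs, Real.norm_eq_abs,
        abs_of_nonneg (le_max_right (u x - b) 0)]
      exact max_le (le_trans (sub_le_self _ hb.le) (le_abs_self _)) (abs_nonneg _)
  · exact lt_of_le_of_lt
      (gagliardoE_mono N s p (by linarith) fun x y => pospart_lip b (u x) (u y)) hG
  · filter_upwards [hZ] with x hx hxΩ
    rw [hx hxΩ, zero_sub, max_eq_right (by linarith : -b ≤ (0:ℝ))]

/-! ### Integral of the nonnegative Gagliardo integrand -/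

private lemma integrable_gag (N : ℕ) (s p : ℝ) {v : Eu N → ℝ}
    (hv : AEMeasurable v (volume : Measure (Eu N)))
    (hG : gagliardoE N s p v ≠ ⊤) :
    Integrable (fun z : Eu N × Eu N =>
      |v z.1 - v z.2| ^ p / dist z.1 z.2 ^ ((N : ℝ) + p * s))
      ((volume : Measure (Eu N)).prod volume) ∧
    ∫ z : Eu N × Eu N, |v z.1 - v z.2| ^ p / dist z.1 z.2 ^ ((N : ℝ) + p * s)
      ∂((volume : Measure (Eu N)).prod volume) = (gagliardoE N s p v).toReal := by
  set π : Measure (Eu N × Eu N) := (volume : Measure (Eu N)).prod volume with hπ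
  set c : ℝ := (N : ℝ) + p * s with hc_def
  have h1 : AEMeasurable (fun z : Eu N × Eu N => v z.1) π :=
    hv.comp_quasiMeasurePreserving Measure.quasiMeasurePreserving_fst
  have h2 : AEMeasurable (fun z : Eu N × Eu N => v z.2) π :=
    hv.comp_quasiMeasurePreserving Measure.quasiMeasurePreserving_snd
  have hdist : Measurable (fun z : Eu N × Eu N => dist z.1 z.2) := measurable_dist
  have habsV : AEMeasurable (fun z : Eu N × Eu N => |v z.1 - v z.2|) π :=
    aemeasurable_abs (h1.sub h2)
  have hpow : AEMeasurable (fun z : Eu N × Eu N => |v z.1 - v z.2| ^ p) π := by fun_prop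
  have hden : AEMeasurable (fun z : Eu N × Eu N => dist z.1 z.2 ^ c) π := by fun_prop
  have hmeas : AEMeasurable (fun z : Eu N × Eu N =>
      |v z.1 - v z.2| ^ p / dist z.1 z.2 ^ c) π :=
    hpow.div hden
  have hnn : ∀ z : Eu N × Eu N, 0 ≤ |v z.1 - v z.2| ^ p / dist z.1 z.2 ^ c :=
    fun z => by positivity
  have hlin : ∫⁻ z, ENNReal.ofReal (|v z.1 - v z.2| ^ p / dist z.1 z.2 ^ c) ∂π
      = gagliardoE N s p v := (gagliardo_prod N s p hv).symm
  have hInt : Integrable (fun z : Eu N × Eu N =>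
      |v z.1 - v z.2| ^ p / dist z.1 z.2 ^ c) π := by
    refine ⟨hmeas.aestronglyMeasurable, ?_⟩
    rw [hasFiniteIntegral_iff_norm]
    calc ∫⁻ z, ENNReal.ofReal ‖|v z.1 - v z.2| ^ p / dist z.1 z.2 ^ c‖ ∂π
        = ∫⁻ z, ENNReal.ofReal (|v z.1 - v z.2| ^ p / dist z.1 z.2 ^ c) ∂π := by
          refine lintegral_congr fun z => ?_
          rw [Real.norm_eq_abs, abs_of_nonneg (hnn z)]
      _ < ⊤ := lt_of_le_of_ne le_top (hlin ▸ hG)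
  refine ⟨hInt, ?_⟩
  rw [integral_eq_lintegral_of_nonneg_ae (Filter.Eventually.of_forall hnn)
    hmeas.aestronglyMeasurable, hlin]

end Aux

/-- solutions of the truncated problem satisfy `0 ≤ u ≤ b` and solve the
original problem. -/
theorem truncated_solutions_are_solutions
    (N : ℕ) (p s : ℝ) (Ω : Set (Eu N))
    (hN : 2 ≤ N) (hp : 2 ≤ p) (hs0 : 0 < s) (hs1 : s < 1) (hNps : p * s < (N : ℝ))
    (hΩ : IsC11Domain Ω)
    (b : ℝ) (hb : 0 < b)
    (f : Eu N → ℝ → ℝ) (hf : IsCaratheodory Ω f)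
    (hf0 : ∀ᵐ x, x ∈ Ω → ∀ t ≤ (0 : ℝ), f x t = 0)
    (hfb : ∀ᵐ x, x ∈ Ω → f x b ≤ 0)
    (a : Eu N → ℝ) (ha : MemLinftyOn Ω a)
    (hbd : ∀ᵐ x, x ∈ Ω → ∀ t, 0 ≤ t → t ≤ b → |f x t| ≤ a x)
    (u : Eu N → ℝ)
    (hu : IsWeakSolution N s p Ω (fun x t => f x (min t b)) u) :
    (∀ᵐ x, x ∈ Ω → 0 ≤ u x ∧ u x ≤ b) ∧ IsWeakSolution N s p Ω f u := by
  obtain ⟨hW0, heq⟩ := hu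
  obtain ⟨huLp, huG, huZ⟩ := hW0
  have hΩmeas : MeasurableSet Ω := hΩ.1.measurableSet
  have hΩb : IsBounded Ω := hΩ.2.2.1
  have huMeas : AEMeasurable u (volume : Measure (Eu N)) := huLp.1.aemeasurable
  have hc : 0 < (N : ℝ) + p * s := by
    have h1 : (0 : ℝ) < p * s := mul_pos (by linarith) hs0
    have h2 : (0 : ℝ) ≤ (N : ℝ) := Nat.cast_nonneg N
    linarith
  -- the two truncation test functions
  have hvW0 : MemW0 N s p Ω (fun x => max (-u x) 0) :=
    memW0_negPart hp ⟨huLp, huG, huZ⟩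
  have hwW0 : MemW0 N s p Ω (fun x => max (u x - b) 0) :=
    memW0_posPartSub hp hb ⟨huLp, huG, huZ⟩
  have hvMeas : AEMeasurable (fun x => max (-u x) 0) (volume : Measure (Eu N)) :=
    hvW0.1.1.aemeasurable
  have hwMeas : AEMeasurable (fun x => max (u x - b) 0) (volume : Measure (Eu N)) :=
    hwW0.1.1.aemeasurable
  have hvG : gagliardoE N s p (fun x => max (-u x) 0) ≠ ⊤ := ne_of_lt hvW0.2.1
  have hwG : gagliardoE N s p (fun x => max (u x - b) 0) ≠ ⊤ := ne_of_lt hwW0.2.1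
  -- Step 1: testing with the negative part
  have hG0v : gagliardoE N s p (fun x => max (-u x) 0) = 0 := by
    have e1 : fracPairing N s p u (fun x => max (-u x) 0)
        = ∫ x in Ω, f x (min (u x) b) * max (-u x) 0 := heq _ hvW0
    have hRHS0 : ∫ x in Ω, f x (min (u x) b) * max (-u x) 0 = 0 := by
      have hae : ∀ᵐ x ∂((volume : Measure (Eu N)).restrict Ω),
          f x (min (u x) b) * max (-u x) 0 = (fun _ => (0:ℝ)) x := by
        rw [ae_restrict_iff' hΩmeas]
        filter_upwards [hf0] with x hx hxΩ
        rcases le_or_gt 0 (u x) with h | h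
        · rw [max_eq_right (neg_nonpos.2 h), mul_zero]
        · rw [min_eq_left (by linarith), hx hxΩ (u x) h.le, zero_mul]
      rw [integral_congr_ae hae, integral_zero]
    obtain ⟨hIntU, hreprU⟩ := pairing_repr N s p hp hc huMeas hvMeas (ne_of_lt huG) hvG
    obtain ⟨hIntV, hVal⟩ := integrable_gag N s p hvMeas hvG
    have hIntVneg : Integrable (fun z : Eu N × Eu N =>
        -(|max (-u z.1) 0 - max (-u z.2) 0| ^ p / dist z.1 z.2 ^ ((N : ℝ) + p * s)))
        ((volume : Measure (Eu N)).prod volume) := hIntV.neg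
    have hptw : ∀ z : Eu N × Eu N,
        |u z.1 - u z.2| ^ (p - 2) * (u z.1 - u z.2) *
            ((fun x => max (-u x) 0) z.1 - (fun x => max (-u x) 0) z.2) /
          dist z.1 z.2 ^ ((N : ℝ) + p * s)
        ≤ -(|max (-u z.1) 0 - max (-u z.2) 0| ^ p / dist z.1 z.2 ^ ((N : ℝ) + p * s)) := by
      intro z
      have hd0 : (0 : ℝ) ≤ (dist z.1 z.2 ^ ((N : ℝ) + p * s))⁻¹ := by positivity
      rw [← neg_div, div_eq_mul_inv, div_eq_mul_inv]
      exact mul_le_mul_of_nonneg_right (key_neg p hp (u z.1) (u z.2)) hd0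
    have e3a : ∫ z : Eu N × Eu N,
        |u z.1 - u z.2| ^ (p - 2) * (u z.1 - u z.2) *
            ((fun x => max (-u x) 0) z.1 - (fun x => max (-u x) 0) z.2) /
          dist z.1 z.2 ^ ((N : ℝ) + p * s) ∂((volume : Measure (Eu N)).prod volume)
        ≤ ∫ z : Eu N × Eu N,
        -(|max (-u z.1) 0 - max (-u z.2) 0| ^ p / dist z.1 z.2 ^ ((N : ℝ) + p * s))
          ∂((volume : Measure (Eu N)).prod volume) :=
      integral_mono_ae hIntU hIntVneg (Filter.Eventually.of_forall hptw)
    have e3b : ∫ z : Eu N × Eu N,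
        -(|max (-u z.1) 0 - max (-u z.2) 0| ^ p / dist z.1 z.2 ^ ((N : ℝ) + p * s))
          ∂((volume : Measure (Eu N)).prod volume)
        = -∫ z : Eu N × Eu N,
        |max (-u z.1) 0 - max (-u z.2) 0| ^ p / dist z.1 z.2 ^ ((N : ℝ) + p * s)
          ∂((volume : Measure (Eu N)).prod volume) := integral_neg _
    have htoReal : (gagliardoE N s p (fun x => max (-u x) 0)).toReal ≤ 0 := by
      have h0 : (0 : ℝ) ≤
          -(gagliardoE N s p (fun x => max (-u x) 0)).toReal := by
        calc (0 : ℝ) = fracPairing N s p u (fun x => max (-u x) 0) := by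
              rw [e1, hRHS0]
          _ = _ := hreprU
          _ ≤ _ := e3a
          _ = -∫ z : Eu N × Eu N,
              |max (-u z.1) 0 - max (-u z.2) 0| ^ p /
                dist z.1 z.2 ^ ((N : ℝ) + p * s)
                ∂((volume : Measure (Eu N)).prod volume) := e3b
          _ = -(gagliardoE N s p (fun x => max (-u x) 0)).toReal := by rw [hVal]
      linarith
    have h2 : (gagliardoE N s p (fun x => max (-u x) 0)).toReal = 0 :=
      le_antisymm htoReal ENNReal.toReal_nonneg
    rcases (ENNReal.toReal_eq_zero_iff _).1 h2 with h | h
    · exact h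
    · exact absurd h hvG
  have hvzero : (fun x => max (-u x) 0) =ᵐ[(volume : Measure (Eu N))] 0 :=
    ae_zero_of_gagliardo_zero N s p hN (by linarith) hΩb hvMeas hG0v hvW0.2.2
  -- Step 2: testing with (u-b)^+
  have hG0w : gagliardoE N s p (fun x => max (u x - b) 0) = 0 := by
    have e1 : fracPairing N s p u (fun x => max (u x - b) 0)
        = ∫ x in Ω, f x (min (u x) b) * max (u x - b) 0 := heq _ hwW0
    have hRHSle : ∫ x in Ω, f x (min (u x) b) * max (u x - b) 0 ≤ 0 := by
      apply integral_nonpos_of_ae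
      rw [Filter.EventuallyLE, ae_restrict_iff' hΩmeas]
      filter_upwards [hfb] with x hx hxΩ
      rcases le_or_gt (u x) b with h | h
      · rw [max_eq_right (by linarith : u x - b ≤ (0:ℝ))]
        simp
      · rw [min_eq_right h.le]
        exact mul_nonpos_iff.2 (Or.inr ⟨hx hxΩ, le_max_right _ _⟩)
    obtain ⟨hIntU, hreprU⟩ := pairing_repr N s p hp hc huMeas hwMeas (ne_of_lt huG) hwG
    obtain ⟨hIntW, hVal⟩ := integrable_gag N s p hwMeas hwG
    have hptw : ∀ z : Eu N × Eu N,
        |max (u z.1 - b) 0 - max (u z.2 - b) 0| ^ p / dist z.1 z.2 ^ ((N : ℝ) + p * s)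
        ≤ |u z.1 - u z.2| ^ (p - 2) * (u z.1 - u z.2) *
            ((fun x => max (u x - b) 0) z.1 - (fun x => max (u x - b) 0) z.2) /
          dist z.1 z.2 ^ ((N : ℝ) + p * s) := by
      intro z
      have hd0 : (0 : ℝ) ≤ (dist z.1 z.2 ^ ((N : ℝ) + p * s))⁻¹ := by positivity
      rw [div_eq_mul_inv, div_eq_mul_inv]
      exact mul_le_mul_of_nonneg_right (key_pos p hp b (u z.1) (u z.2)) hd0
    have e3a : ∫ z : Eu N × Eu N,
        |max (u z.1 - b) 0 - max (u z.2 - b) 0| ^ p / dist z.1 z.2 ^ ((N : ℝ) + p * s)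
          ∂((volume : Measure (Eu N)).prod volume)
        ≤ ∫ z : Eu N × Eu N,
        |u z.1 - u z.2| ^ (p - 2) * (u z.1 - u z.2) *
            ((fun x => max (u x - b) 0) z.1 - (fun x => max (u x - b) 0) z.2) /
          dist z.1 z.2 ^ ((N : ℝ) + p * s) ∂((volume : Measure (Eu N)).prod volume) :=
      integral_mono_ae hIntW hIntU (Filter.Eventually.of_forall hptw)
    have htoReal : (gagliardoE N s p (fun x => max (u x - b) 0)).toReal ≤ 0 := by
      calc (gagliardoE N s p (fun x => max (u x - b) 0)).toReal
          = ∫ z : Eu N × Eu N,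
            |max (u z.1 - b) 0 - max (u z.2 - b) 0| ^ p /
              dist z.1 z.2 ^ ((N : ℝ) + p * s)
              ∂((volume : Measure (Eu N)).prod volume) := hVal.symm
        _ ≤ _ := e3a
        _ = fracPairing N s p u (fun x => max (u x - b) 0) := hreprU.symm
        _ = ∫ x in Ω, f x (min (u x) b) * max (u x - b) 0 := e1
        _ ≤ 0 := hRHSle
    have h2 : (gagliardoE N s p (fun x => max (u x - b) 0)).toReal = 0 :=
      le_antisymm htoReal ENNReal.toReal_nonneg
    rcases (ENNReal.toReal_eq_zero_iff _).1 h2 with h | h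
    · exact h
    · exact absurd h hwG
  have hwzero : (fun x => max (u x - b) 0) =ᵐ[(volume : Measure (Eu N))] 0 :=
    ae_zero_of_gagliardo_zero N s p hN (by linarith) hΩb hwMeas hG0w hwW0.2.2
  -- a.e. bounds
  have hbdd : ∀ᵐ x, 0 ≤ u x ∧ u x ≤ b := by
    filter_upwards [hvzero, hwzero] with x h1 h2
    simp only [Pi.zero_apply] at h1 h2
    constructor
    · have h3 := le_max_left (-u x) 0
      rw [h1] at h3
      linarith
    · have h3 := le_max_left (u x - b) 0
      rw [h2] at h3
      linarith
  constructor
  · filter_upwards [hbdd] with x hx _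
    exact hx
  · refine ⟨⟨huLp, huG, huZ⟩, fun φ hφ => ?_⟩
    have e1 : fracPairing N s p u φ = ∫ x in Ω, f x (min (u x) b) * φ x := heq φ hφ
    rw [e1]
    apply setIntegral_congr_ae hΩmeas
    filter_upwards [hbdd] with x hx _
    rw [min_eq_left hx.2]


end
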